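/- There exists a universal constant C > 0 such that for every y ∈ ℝ, the function Ψ_y(t) = (1 − cos(yt))/t² on (0,∞) has total variation at most C y²; explicitly, ∫₀^∞ | y t sin(yt) + 2 cos(yt) − 2 | / t³ dt ≤ C y². -/

import Mathlib

open MeasureTheory

lemma stmt13_small {u : ℝ} (hu : |u| ≤ 1) :
    |u * Real.sin u + 2 * Real.cos u - 2| ≤ u ^ 4 := by
  have hs := Real.sin_bound hu
  have hc := Real.cos_bound hu
  have key : u * Real.sin u + 2 * Real.cos u - 2
      = u * (Real.sin u - (u - u ^ 3 / 6)) + 2 * (Real.cos u - (1 - u ^ 2 / 2)) - u ^ 4 / 6 := by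
    ring
  rw [key]
  have h1 : |u * (Real.sin u - (u - u ^ 3 / 6))| ≤ |u| * (|u| ^ 4 * (5 / 96)) := by
    rw [abs_mul]
    exact mul_le_mul_of_nonneg_left (hs.trans (by
      have h0 := abs_nonneg u
      have h4 := mul_le_mul_of_nonneg_right hu (pow_nonneg h0 4)
      nlinarith [pow_nonneg h0 4])) (abs_nonneg u)
  have h2 : |2 * (Real.cos u - (1 - u ^ 2 / 2))| ≤ 2 * (|u| ^ 4 * (5 / 96)) := by
    rw [abs_mul]
    simpa using mul_le_mul_of_nonneg_left hc (by norm_num : (0:ℝ) ≤ |2|)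
  have htri : |u * (Real.sin u - (u - u ^ 3 / 6)) + 2 * (Real.cos u - (1 - u ^ 2 / 2)) - u ^ 4 / 6|
      ≤ |u * (Real.sin u - (u - u ^ 3 / 6))| + |2 * (Real.cos u - (1 - u ^ 2 / 2))| + |u ^ 4 / 6| :=
    (abs_sub _ _).trans (by gcongr; exact abs_add_le _ _)
  have habs4 : |u| ^ 4 = u ^ 4 := by rw [← abs_pow, abs_of_nonneg (by positivity)]
  have habs46 : |u ^ 4 / 6| = u ^ 4 / 6 := abs_of_nonneg (by positivity)
  have hu0 : (0:ℝ) ≤ |u| := abs_nonneg u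
  nlinarith [pow_nonneg hu0 4, mul_le_mul_of_nonneg_right hu (pow_nonneg hu0 4)]

lemma stmt13_big (u : ℝ) :
    |u * Real.sin u + 2 * Real.cos u - 2| ≤ |u| + 4 := by
  have h1 : |u * Real.sin u| ≤ |u| := by
    rw [abs_mul]
    simpa using mul_le_mul_of_nonneg_left (Real.abs_sin_le_one u) (abs_nonneg u)
  have h2 : |2 * Real.cos u - 2| ≤ 4 := by
    have := Real.abs_cos_le_one u
    rw [abs_le] at this ⊢
    constructor <;> linarith [this.1, this.2]
  have : u * Real.sin u + 2 * Real.cos u - 2 = u * Real.sin u + (2 * Real.cos u - 2) := by ring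
  rw [this]
  exact (abs_add_le _ _).trans (add_le_add h1 h2)

/-- The total variation of `Ψ_y(t) = (1 - cos(yt))/t²` on `(0,∞)` is at most `C y²`:
`∫₀^∞ |y t sin(yt) + 2 cos(yt) - 2| / t³ dt ≤ C y²`. -/
theorem stmt_13 : ∃ C > 0, ∀ y : ℝ,
    (∫ t in Set.Ioi (0 : ℝ),
        |y * t * Real.sin (y * t) + 2 * Real.cos (y * t) - 2| / t ^ 3) ≤ C * y ^ 2 := by
  refine ⟨4, by norm_num, fun y => ?_⟩
  rcases eq_or_ne y 0 with rfl | hy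
  · simp
  set b : ℝ := |y| with hb
  have hb0 : 0 < b := abs_pos.mpr hy
  set a : ℝ := b⁻¹ with ha_def
  have ha : 0 < a := inv_pos.mpr hb0
  set g : ℝ → ℝ := fun t => |y * t * Real.sin (y * t) + 2 * Real.cos (y * t) - 2| / t ^ 3
    with hg
  have hgmeas : Measurable g := by
    apply Measurable.div
    · apply Measurable.abs
      fun_prop
    · fun_prop
  have hgnonneg : ∀ t : ℝ, 0 < t → 0 ≤ g t := fun t ht =>
    div_nonneg (abs_nonneg _) (by positivity)
  -- bound on (0, a]
  have hbound1 : ∀ t ∈ Set.Ioc (0:ℝ) a, g t ≤ y ^ 4 * t := by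
    intro t ht
    have ht0 : 0 < t := ht.1
    have hyt : |y * t| ≤ 1 := by
      rw [abs_mul, abs_of_pos ht0]
      calc b * t ≤ b * a := by gcongr; exact ht.2
        _ = 1 := mul_inv_cancel₀ hb0.ne'
    have := stmt13_small hyt
    have hgt : g t = |y * t * Real.sin (y * t) + 2 * Real.cos (y * t) - 2| / t ^ 3 := rfl
    rw [hgt, div_le_iff₀ (by positivity)]
    calc |y * t * Real.sin (y * t) + 2 * Real.cos (y * t) - 2| ≤ (y * t) ^ 4 := this
      _ = y ^ 4 * t * t ^ 3 := by ring
  -- bound on (a, ∞)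
  have hbound2 : ∀ t ∈ Set.Ioi a, g t ≤ b * t ^ (-2 : ℝ) + 4 * t ^ (-3 : ℝ) := by
    intro t ht
    have ht0 : 0 < t := lt_trans ha ht
    have h1 := stmt13_big (y * t)
    have hgt : g t = |y * t * Real.sin (y * t) + 2 * Real.cos (y * t) - 2| / t ^ 3 := rfl
    have hr2 : t ^ (-2 : ℝ) = (t ^ 2)⁻¹ := by
      rw [show (-2 : ℝ) = -(2:ℕ) by norm_num, Real.rpow_neg ht0.le, Real.rpow_natCast]
    have hr3 : t ^ (-3 : ℝ) = (t ^ 3)⁻¹ := by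
      rw [show (-3 : ℝ) = -(3:ℕ) by norm_num, Real.rpow_neg ht0.le, Real.rpow_natCast]
    rw [hgt, hr2, hr3]
    have habs : |y * t| = b * t := by rw [abs_mul, abs_of_pos ht0]
    rw [div_le_iff₀ (by positivity)]
    have hrhs : (b * (t ^ 2)⁻¹ + 4 * (t ^ 3)⁻¹) * t ^ 3 = b * t + 4 := by
      field_simp
    rw [hrhs]
    calc |y * t * Real.sin (y * t) + 2 * Real.cos (y * t) - 2| ≤ |y * t| + 4 := h1
      _ = b * t + 4 := by rw [habs]
  -- integrability of bounds
  have hInt1 : IntegrableOn (fun t => y ^ 4 * t) (Set.Ioc (0:ℝ) a) :=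
    (continuous_const.mul continuous_id).integrableOn_Ioc
  have hInt2 : IntegrableOn (fun t => b * t ^ (-2 : ℝ) + 4 * t ^ (-3 : ℝ)) (Set.Ioi a) := by
    exact ((integrableOn_Ioi_rpow_of_lt (by norm_num) ha).const_mul b).add
      ((integrableOn_Ioi_rpow_of_lt (by norm_num) ha).const_mul 4)
  -- integrability of g on each piece
  have hg1 : IntegrableOn g (Set.Ioc (0:ℝ) a) := by
    refine Integrable.mono' hInt1 (hgmeas.aestronglyMeasurable.restrict) ?_
    rw [MeasureTheory.ae_restrict_iff' measurableSet_Ioc]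
    filter_upwards with t ht
    rw [Real.norm_eq_abs, abs_of_nonneg (hgnonneg t ht.1)]
    exact hbound1 t ht
  have hg2 : IntegrableOn g (Set.Ioi a) := by
    refine Integrable.mono' hInt2 (hgmeas.aestronglyMeasurable.restrict) ?_
    rw [MeasureTheory.ae_restrict_iff' measurableSet_Ioi]
    filter_upwards with t ht
    rw [Real.norm_eq_abs, abs_of_nonneg (hgnonneg t (ha.trans ht))]
    exact hbound2 t ht
  -- split the integral
  have hsplit : (∫ t in Set.Ioi (0:ℝ), g t)
      = (∫ t in Set.Ioc (0:ℝ) a, g t) + ∫ t in Set.Ioi a, g t := by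
    rw [← Set.Ioc_union_Ioi_eq_Ioi ha.le,
      setIntegral_union (Set.Ioc_disjoint_Ioi le_rfl) measurableSet_Ioi hg1 hg2]
  -- evaluate the first bound integral
  have hI1 : (∫ t in Set.Ioc (0:ℝ) a, y ^ 4 * t) = y ^ 2 / 2 := by
    rw [← intervalIntegral.integral_of_le ha.le]
    rw [intervalIntegral.integral_const_mul, integral_id]
    have hb2 : b ^ 2 = y ^ 2 := sq_abs y
    rw [ha_def]
    field_simp
    nlinarith [sq_abs y, sq_nonneg y]
  -- evaluate the second bound integral
  have hI2 : (∫ t in Set.Ioi a, (b * t ^ (-2 : ℝ) + 4 * t ^ (-3 : ℝ))) = 3 * y ^ 2 := by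
    rw [integral_add ((integrableOn_Ioi_rpow_of_lt (by norm_num) ha).const_mul b)
      ((integrableOn_Ioi_rpow_of_lt (by norm_num) ha).const_mul 4),
      integral_const_mul, integral_const_mul,
      integral_Ioi_rpow_of_lt (by norm_num) ha, integral_Ioi_rpow_of_lt (by norm_num) ha]
    have e1 : a ^ ((-2 : ℝ) + 1) = b := by
      norm_num
      rw [Real.rpow_neg_one]
      simp [ha_def]
    have e2 : a ^ ((-3 : ℝ) + 1) = b ^ 2 := by
      norm_num
      simp [ha_def]
    rw [e1, e2]
    have hb2 : b ^ 2 = y ^ 2 := sq_abs y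
    field_simp
    nlinarith [sq_abs y]
  -- combine
  calc (∫ t in Set.Ioi (0:ℝ), g t)
      = (∫ t in Set.Ioc (0:ℝ) a, g t) + ∫ t in Set.Ioi a, g t := hsplit
    _ ≤ (∫ t in Set.Ioc (0:ℝ) a, y ^ 4 * t)
        + ∫ t in Set.Ioi a, (b * t ^ (-2 : ℝ) + 4 * t ^ (-3 : ℝ)) := by
        apply add_le_add
        · exact setIntegral_mono_on hg1 hInt1 measurableSet_Ioc hbound1
        · exact setIntegral_mono_on hg2 hInt2 measurableSet_Ioi hbound2
    _ = y ^ 2 / 2 + 3 * y ^ 2 := by rw [hI1, hI2]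
    _ ≤ 4 * y ^ 2 := by nlinarith [sq_nonneg y]
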